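/- The biquadratic function Z(s) = (a₂s² + a₁s + a₀)/(b₂s² + b₁s + b₀) with nonnegative coefficients a₂,a₁,a₀,b₂,b₁,b₀ ≥ 0 (and denominator not identically zero) is positive-real if and only if (√(a₀b₂) − √(a₂b₀))² ≤ a₁b₁. -/

import Mathlib

lemma poly_re (a₂ a₁ a₀ : ℝ) (s : ℂ) :
    ((a₂ : ℂ) * s ^ 2 + (a₁ : ℂ) * s + (a₀ : ℂ)).re
      = a₂ * (s.re^2 - s.im^2) + a₁ * s.re + a₀ := by
  simp [Complex.add_re, Complex.mul_re, pow_two]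

lemma poly_im (a₂ a₁ a₀ : ℝ) (s : ℂ) :
    ((a₂ : ℂ) * s ^ 2 + (a₁ : ℂ) * s + (a₀ : ℂ)).im
      = s.im * (2 * a₂ * s.re + a₁) := by
  simp [Complex.add_im, Complex.mul_im, pow_two]
  ring

lemma denom_ne (b₂ b₁ b₀ : ℝ) (hb₂ : 0 ≤ b₂) (hb₁ : 0 ≤ b₁) (hb₀ : 0 ≤ b₀)
    (hden : ¬(b₂ = 0 ∧ b₁ = 0 ∧ b₀ = 0)) (s : ℂ) (hs : 0 < s.re) :
    ((b₂ : ℂ) * s ^ 2 + (b₁ : ℂ) * s + (b₀ : ℂ)) ≠ 0 := by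
  intro h
  have hre := congrArg Complex.re h
  have him := congrArg Complex.im h
  rw [poly_re] at hre
  rw [poly_im] at him
  simp at hre him
  have hx2 := mul_pos hs hs
  rcases him with hy | hlin
  · rw [hy] at hre
    have h2 : b₂ = 0 := by nlinarith [mul_nonneg hb₁ hs.le]
    have h1 : b₁ = 0 := by nlinarith [mul_nonneg hb₂ hx2.le]
    have h0 : b₀ = 0 := by nlinarith [mul_nonneg hb₂ hx2.le, mul_nonneg hb₁ hs.le]
    exact hden ⟨h2, h1, h0⟩
  · have h2 : b₂ = 0 := by nlinarith [mul_nonneg hb₂ hs.le]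
    have h1 : b₁ = 0 := by nlinarith [mul_nonneg hb₂ hs.le]
    have h0 : b₀ = 0 := by
      rw [h2, h1] at hre; linarith [hre]
    exact hden ⟨h2, h1, h0⟩

lemma F_nonneg (a₂ a₁ a₀ b₂ b₁ b₀ : ℝ)
    (ha₂ : 0 ≤ a₂) (ha₁ : 0 ≤ a₁) (ha₀ : 0 ≤ a₀)
    (hb₂ : 0 ≤ b₂) (hb₁ : 0 ≤ b₁) (hb₀ : 0 ≤ b₀)
    (hineq : (Real.sqrt (a₀ * b₂) - Real.sqrt (a₂ * b₀)) ^ 2 ≤ a₁ * b₁)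
    (x y : ℝ) (hx : 0 ≤ x) :
    0 ≤ (a₂*(x^2-y^2)+a₁*x+a₀)*(b₂*(x^2-y^2)+b₁*x+b₀)
        + (y*(2*a₂*x+a₁))*(y*(2*b₂*x+b₁)) := by
  set p := Real.sqrt (a₀ * b₂) with hp
  set q := Real.sqrt (a₂ * b₀) with hq
  set sA := Real.sqrt (a₂ * b₂) with hsAdef
  set sC := Real.sqrt (a₀ * b₀) with hsCdef
  have hsA : sA^2 = a₂ * b₂ := Real.sq_sqrt (mul_nonneg ha₂ hb₂)
  have hsC : sC^2 = a₀ * b₀ := Real.sq_sqrt (mul_nonneg ha₀ hb₀)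
  have hp2 : p^2 = a₀ * b₂ := Real.sq_sqrt (mul_nonneg ha₀ hb₂)
  have hq2 : q^2 = a₂ * b₀ := Real.sq_sqrt (mul_nonneg ha₂ hb₀)
  have hpq : sA * sC = p * q := by
    rw [hp, hq, hsAdef, hsCdef, ← Real.sqrt_mul (mul_nonneg ha₂ hb₂),
        ← Real.sqrt_mul (mul_nonneg ha₀ hb₂)]
    ring_nf
  have e2 : (sA * y^2 - sC)^2 = a₂*b₂*y^4 - 2*(p*q)*y^2 + a₀*b₀ := by
    calc (sA * y^2 - sC)^2 = sA^2*(y^2)^2 - 2*(sA*sC)*y^2 + sC^2 := by ring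
      _ = a₂*b₂*y^4 - 2*(p*q)*y^2 + a₀*b₀ := by rw [hsA, hsC, hpq]; ring
  have h2 : 0 ≤ a₂*b₂*y^4 - 2*(p*q)*y^2 + a₀*b₀ := e2 ▸ sq_nonneg _
  have hB : 0 ≤ a₁*b₁ - a₀*b₂ - a₂*b₀ + 2*(p*q) := by nlinarith [hineq, hp2, hq2]
  have h3 : 0 ≤ (a₁*b₁ - a₀*b₂ - a₂*b₀ + 2*(p*q)) * y^2 :=
    mul_nonneg hB (sq_nonneg y)
  have h1 : 0 ≤ a₂*b₂*(x^2*(x^2+2*y^2)) :=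
    mul_nonneg (mul_nonneg ha₂ hb₂)
      (mul_nonneg (sq_nonneg x) (by positivity))
  have h4 : 0 ≤ (a₂*b₁+a₁*b₂)*x*(x^2+y^2) :=
    mul_nonneg (mul_nonneg (by positivity) hx) (by positivity)
  have h5 : 0 ≤ (a₁*b₀+a₀*b₁)*x := mul_nonneg (by positivity) hx
  have h6 : 0 ≤ (a₀*b₂+a₂*b₀+a₁*b₁)*x^2 := mul_nonneg (by positivity) (sq_nonneg x)
  nlinarith [h1, h2, h3, h4, h5, h6]

lemma axis_to_ineq (a₂ a₁ a₀ b₂ b₁ b₀ : ℝ)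
    (ha₂ : 0 ≤ a₂) (ha₁ : 0 ≤ a₁) (ha₀ : 0 ≤ a₀)
    (hb₂ : 0 ≤ b₂) (hb₁ : 0 ≤ b₁) (hb₀ : 0 ≤ b₀)
    (h : ∀ t : ℝ, 0 ≤ t →
      0 ≤ a₂*b₂*t^2 + (a₁*b₁ - a₀*b₂ - a₂*b₀)*t + a₀*b₀) :
    (Real.sqrt (a₀ * b₂) - Real.sqrt (a₂ * b₀)) ^ 2 ≤ a₁ * b₁ := by
  set p := Real.sqrt (a₀ * b₂) with hpdef
  set q := Real.sqrt (a₂ * b₀) with hqdef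
  set sA := Real.sqrt (a₂ * b₂) with hsAdef
  set sC := Real.sqrt (a₀ * b₀) with hsCdef
  have hsA : sA^2 = a₂ * b₂ := Real.sq_sqrt (mul_nonneg ha₂ hb₂)
  have hsC : sC^2 = a₀ * b₀ := Real.sq_sqrt (mul_nonneg ha₀ hb₀)
  have hp2 : p^2 = a₀ * b₂ := Real.sq_sqrt (mul_nonneg ha₀ hb₂)
  have hq2 : q^2 = a₂ * b₀ := Real.sq_sqrt (mul_nonneg ha₂ hb₀)
  have hpq : sA * sC = p * q := by
    rw [hpdef, hqdef, hsAdef, hsCdef, ← Real.sqrt_mul (mul_nonneg ha₂ hb₂),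
        ← Real.sqrt_mul (mul_nonneg ha₀ hb₂)]
    ring_nf
  have hsAn : 0 ≤ sA := Real.sqrt_nonneg _
  have hsCn : 0 ≤ sC := Real.sqrt_nonneg _
  by_contra hc
  push_neg at hc
  have hK : 2 * (p*q) < a₀*b₂ + a₂*b₀ - a₁*b₁ := by nlinarith [hp2, hq2]
  set K := a₀*b₂ + a₂*b₀ - a₁*b₁ with hKdef
  have hpqn : 0 ≤ p * q := mul_nonneg (Real.sqrt_nonneg _) (Real.sqrt_nonneg _)
  have hKpos : 0 < K := by linarith
  rcases eq_or_lt_of_le (mul_nonneg ha₂ hb₂) with hA | hApos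
  · have hsA0 : sA = 0 := by
      rw [hsAdef, Real.sqrt_eq_zero (mul_nonneg ha₂ hb₂), ← hA]
    have hpq0 : p * q = 0 := by rw [← hpq, hsA0]; ring
    set t := (a₀*b₀ + 1) / K with htdef
    have htpos : 0 < t := by positivity
    have ht := h t htpos.le
    have hKt : K * t = a₀*b₀ + 1 := by
      rw [htdef]; field_simp
    nlinarith [ht, hKt, hA, sq_nonneg t]
  · have hsApos : 0 < sA := by
      rw [hsAdef]; exact Real.sqrt_pos.2 hApos
    rcases eq_or_lt_of_le hsCn with hsC0 | hsCpos
    · have hC0 : a₀*b₀ = 0 := by rw [← hsC, ← hsC0]; ring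
      have hpq0 : p * q = 0 := by rw [← hpq, ← hsC0]; ring
      set t := K / (2 * (a₂*b₂)) with htdef
      have htpos : 0 < t := by positivity
      have hAt : a₂*b₂ * t = K / 2 := by
        rw [htdef, mul_div_assoc', div_eq_div_iff (by positivity) two_ne_zero]; ring
      have ht := h t htpos.le
      nlinarith [ht, hAt, htpos, mul_pos hKpos htpos]
    · set t := sC / sA with htdef
      have htpos : 0 < t := by positivity
      have hAt : sA * t = sC := by
        rw [htdef]; field_simp
      have hAt2 : a₂*b₂ * t^2 = a₀*b₀ := by
        rw [← hsA, ← hsC, ← hAt]; ring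
      have ht := h t htpos.le
      have h1 : K * t ≤ 2*(a₀*b₀) := by
        rw [hKdef]; linarith [ht, hAt2]
      have h3 : p*q*t = a₀*b₀ := by rw [← hpq, ← hsC, ← hAt]; ring
      have h4 := mul_pos (show (0:ℝ) < K - 2*(p*q) by linarith) htpos
      linarith [h1, h3, h4]

/-- A real-rational function (as a map ℂ → ℂ) is positive-real if it is analytic
and has nonnegative real part on the open right half-plane. -/
def IsPositiveReal (H : ℂ → ℂ) : Prop :=
  DifferentiableOn ℂ H {s : ℂ | 0 < s.re} ∧ ∀ s : ℂ, 0 < s.re → 0 ≤ (H s).re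

theorem biquadratic_positive_real_iff
    (a₂ a₁ a₀ b₂ b₁ b₀ : ℝ)
    (ha₂ : 0 ≤ a₂) (ha₁ : 0 ≤ a₁) (ha₀ : 0 ≤ a₀)
    (hb₂ : 0 ≤ b₂) (hb₁ : 0 ≤ b₁) (hb₀ : 0 ≤ b₀)
    (hden : ¬(b₂ = 0 ∧ b₁ = 0 ∧ b₀ = 0)) :
    IsPositiveReal (fun s : ℂ =>
        ((a₂ : ℂ) * s ^ 2 + (a₁ : ℂ) * s + (a₀ : ℂ)) /
        ((b₂ : ℂ) * s ^ 2 + (b₁ : ℂ) * s + (b₀ : ℂ))) ↔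
      (Real.sqrt (a₀ * b₂) - Real.sqrt (a₂ * b₀)) ^ 2 ≤ a₁ * b₁ := by
  constructor
  · rintro ⟨-, hre⟩
    apply axis_to_ineq a₂ a₁ a₀ b₂ b₁ b₀ ha₂ ha₁ ha₀ hb₂ hb₁ hb₀
    intro t htn
    set y := Real.sqrt t with hydef
    have hy2 : y^2 = t := Real.sq_sqrt htn
    set g : ℝ → ℝ := fun x =>
      (a₂*(x^2-y^2)+a₁*x+a₀)*(b₂*(x^2-y^2)+b₁*x+b₀)
        + (y*(2*a₂*x+a₁))*(y*(2*b₂*x+b₁)) with hgdef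
    have hgpos : ∀ x : ℝ, 0 < x → 0 ≤ g x := by
      intro x hx
      set s : ℂ := ⟨x, y⟩ with hsdef
      have hsre : s.re = x := rfl
      have hsim : s.im = y := rfl
      have hs : 0 < s.re := by rw [hsre]; exact hx
      have hD := denom_ne b₂ b₁ b₀ hb₂ hb₁ hb₀ hden s hs
      have hnsq : 0 < Complex.normSq ((b₂:ℂ) * s ^ 2 + (b₁:ℂ) * s + (b₀:ℂ)) :=
        Complex.normSq_pos.2 hD
      have h0 : 0 ≤ (((a₂ : ℂ) * s ^ 2 + (a₁ : ℂ) * s + (a₀ : ℂ)) /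
          ((b₂ : ℂ) * s ^ 2 + (b₁ : ℂ) * s + (b₀ : ℂ))).re := hre s hs
      rw [Complex.div_re, ← add_div, le_div_iff₀ hnsq] at h0
      rw [poly_re, poly_im, poly_re, poly_im, hsre, hsim] at h0
      rw [hgdef]
      dsimp only
      linarith [h0]
    have hgc : Continuous g := by rw [hgdef]; continuity
    have htend : Filter.Tendsto g (nhdsWithin 0 (Set.Ioi 0)) (nhds (g 0)) :=
      (hgc.tendsto 0).mono_left nhdsWithin_le_nhds
    have h00 : 0 ≤ g 0 :=
      ge_of_tendsto htend (Filter.eventually_of_mem self_mem_nhdsWithin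
        fun x hx => hgpos x hx)
    have e : a₂*b₂*t^2 + (a₁*b₁ - a₀*b₂ - a₂*b₀)*t + a₀*b₀ = g 0 := by
      rw [hgdef]; dsimp only; rw [← hy2]; ring
    linarith [h00, e.ge]
  · intro hineq
    constructor
    · apply DifferentiableOn.div
      · exact Differentiable.differentiableOn (by fun_prop)
      · exact Differentiable.differentiableOn (by fun_prop)
      · intro s hs
        exact denom_ne b₂ b₁ b₀ hb₂ hb₁ hb₀ hden s hs
    · intro s hs
      have hF := F_nonneg a₂ a₁ a₀ b₂ b₁ b₀ ha₂ ha₁ ha₀ hb₂ hb₁ hb₀ hineq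
        s.re s.im hs.le
      show 0 ≤ (((a₂ : ℂ) * s ^ 2 + (a₁ : ℂ) * s + (a₀ : ℂ)) /
          ((b₂ : ℂ) * s ^ 2 + (b₁ : ℂ) * s + (b₀ : ℂ))).re
      rw [Complex.div_re, ← add_div]
      apply div_nonneg _ (Complex.normSq_nonneg _)
      rw [poly_re, poly_im, poly_re, poly_im]
      linarith [hF]
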